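/- Let n ≥ 1 and let x₁ ≥ x₂ ≥ … ≥ xₙ be real numbers. Set S_φ = Σ_{k=1}^n (−1)^{k+1} φ(x_k) and S_Φ = Σ_{k=1}^n (−1)^{k+1} Φ(x_k). Then S_φ² ≤ (2/π) · S_Φ · (1 − S_Φ). -/

import Mathlib

open Real MeasureTheory Set Filter

noncomputable def stdNormalPDF (x : ℝ) : ℝ :=
  (Real.sqrt (2 * Real.pi))⁻¹ * Real.exp (-(x ^ 2) / 2)

noncomputable def stdNormalCDF (x : ℝ) : ℝ :=
  ∫ u in Set.Iic x, stdNormalPDF u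

lemma pdf_eq : stdNormalPDF = fun x => (Real.sqrt (2 * Real.pi))⁻¹ * Real.exp (-(1/2 : ℝ) * x ^ 2) := by
  funext x; rw [stdNormalPDF]; ring_nf

lemma pdf_pos (x : ℝ) : 0 < stdNormalPDF x := by
  rw [stdNormalPDF]; positivity

lemma integrable_pdf : Integrable stdNormalPDF := by
  rw [pdf_eq]
  exact (integrable_exp_neg_mul_sq (by norm_num)).const_mul _

lemma integrable_mul_pdf : Integrable (fun u : ℝ => u * stdNormalPDF u) := by
  rw [pdf_eq]
  have := (integrable_mul_exp_neg_mul_sq (show (0:ℝ) < 1/2 by norm_num)).const_mul (Real.sqrt (2 * Real.pi))⁻¹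
  exact this.congr (Eventually.of_forall fun u => by ring)

lemma integral_pdf : ∫ u : ℝ, stdNormalPDF u = 1 := by
  rw [pdf_eq]
  rw [integral_const_mul, integral_gaussian]
  have : Real.pi / (1/2) = 2 * Real.pi := by ring
  rw [this, inv_mul_cancel₀ (by positivity)]

lemma hasDerivAt_pdf (x : ℝ) : HasDerivAt stdNormalPDF (-x * stdNormalPDF x) x := by
  have e : stdNormalPDF = fun u => (Real.sqrt (2 * Real.pi))⁻¹ * Real.exp (-(u ^ 2) / 2) := rfl
  have h : HasDerivAt (fun u : ℝ => -(u ^ 2) / 2) (-x) x := by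
    have := ((hasDerivAt_pow 2 x).neg).div_const 2
    exact this.congr_deriv (by norm_num <;> ring)
  have h2 := (h.exp).const_mul (Real.sqrt (2 * Real.pi))⁻¹
  rw [e]
  exact h2.congr_deriv (by beta_reduce; ring)

lemma sq_tendsto_atBot : Tendsto (fun x : ℝ => x ^ 2) atBot atTop := by
  have := (tendsto_pow_atTop (n := 2) (by norm_num)).comp (tendsto_abs_atBot_atTop (G := ℝ))
  exact this.congr fun x => by simp [sq_abs]

lemma sq_tendsto_atTop : Tendsto (fun x : ℝ => x ^ 2) atTop atTop :=
  tendsto_pow_atTop two_ne_zero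

lemma tendsto_pdf (l : Filter ℝ) (h : Tendsto (fun x : ℝ => x ^ 2) l atTop) :
    Tendsto stdNormalPDF l (nhds 0) := by
  rw [pdf_eq]
  have h2 : Tendsto (fun x : ℝ => -(1/2 : ℝ) * x ^ 2) l atBot := by
    have := h.const_mul_atTop (show (0:ℝ) < 1/2 by norm_num)
    have := tendsto_neg_atTop_atBot.comp this
    exact this.congr fun x => by simp only [Function.comp_apply]; ring
  have := (Real.tendsto_exp_atBot.comp h2).const_mul (Real.sqrt (2 * Real.pi))⁻¹
  simpa using this

lemma tendsto_pdf_atBot : Tendsto stdNormalPDF atBot (nhds 0) := tendsto_pdf _ sq_tendsto_atBot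
lemma tendsto_pdf_atTop : Tendsto stdNormalPDF atTop (nhds 0) := tendsto_pdf _ sq_tendsto_atTop

lemma integral_Iic_mul_pdf (c : ℝ) :
    ∫ u in Iic c, u * stdNormalPDF u = -stdNormalPDF c := by
  have : ∫ u in Iic c, -(u * stdNormalPDF u) = stdNormalPDF c - 0 := by
    refine integral_Iic_of_hasDerivAt_of_tendsto' (f := stdNormalPDF) (fun u _ => ?_)
      (integrable_mul_pdf.neg.integrableOn) tendsto_pdf_atBot
    have := hasDerivAt_pdf u
    exact this.congr_deriv (by ring)
  rw [integral_neg] at this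
  linarith

lemma integral_Ioi_mul_pdf (c : ℝ) :
    ∫ u in Ioi c, u * stdNormalPDF u = stdNormalPDF c := by
  have : ∫ u in Ioi c, -(u * stdNormalPDF u) = 0 - stdNormalPDF c := by
    refine integral_Ioi_of_hasDerivAt_of_tendsto' (f := stdNormalPDF) (fun u _ => ?_)
      (integrable_mul_pdf.neg.integrableOn) tendsto_pdf_atTop
    have := hasDerivAt_pdf u
    exact this.congr_deriv (by ring)
  rw [integral_neg] at this
  linarith

lemma cdf_sub_cdf (a b : ℝ) : stdNormalCDF b - stdNormalCDF a = ∫ u in a..b, stdNormalPDF u := by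
  have h := intervalIntegral.integral_Iic_sub_Iic (f := stdNormalPDF) (μ := volume) (a := a) (b := b)
    integrable_pdf.integrableOn integrable_pdf.integrableOn
  rw [stdNormalCDF, stdNormalCDF]
  exact h

lemma integral_Ioi_pdf (a : ℝ) : ∫ u in Ioi a, stdNormalPDF u = 1 - stdNormalCDF a := by
  have := intervalIntegral.integral_Iic_add_Ioi (b := a) (f := stdNormalPDF) (μ := volume)
    integrable_pdf.integrableOn integrable_pdf.integrableOn
  rw [integral_pdf] at this
  rw [← this, stdNormalCDF]; ring

lemma hasDerivAt_cdf (x : ℝ) : HasDerivAt stdNormalCDF (stdNormalPDF x) x := by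
  have key : ∀ y : ℝ, stdNormalCDF y = stdNormalCDF 0 + ∫ u in (0:ℝ)..y, stdNormalPDF u := by
    intro y; have := cdf_sub_cdf 0 y; linarith
  have cont : Continuous stdNormalPDF := by
    rw [pdf_eq]; continuity
  have h := intervalIntegral.integral_hasDerivAt_right
    (f := stdNormalPDF) (a := 0) (b := x)
    (integrable_pdf.intervalIntegrable)
    (cont.stronglyMeasurableAtFilter _ _) cont.continuousAt
  have := h.const_add (stdNormalCDF 0)
  exact this.congr_of_eventuallyEq (Eventually.of_forall fun y => (key y))

lemma tendsto_cdf_atBot : Tendsto stdNormalCDF atBot (nhds 0) := by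
  have h := intervalIntegral_tendsto_integral_Iic (0:ℝ) (f := stdNormalPDF) (μ := volume)
    integrable_pdf.integrableOn tendsto_id
  -- h : Tendsto (fun a => ∫ u in a..0, pdf) atBot (𝓝 (∫ Iic 0)) = 𝓝 (stdNormalCDF 0)
  have h2 : Tendsto (fun a : ℝ => stdNormalCDF 0 - ∫ u in a..(0:ℝ), stdNormalPDF u) atBot
      (nhds (stdNormalCDF 0 - stdNormalCDF 0)) := by
    exact (tendsto_const_nhds.sub (h.congr (fun a => rfl)))
  simp only [sub_self] at h2
  refine h2.congr fun a => ?_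
  have := cdf_sub_cdf a 0
  linarith

lemma tendsto_cdf_atTop : Tendsto stdNormalCDF atTop (nhds 1) := by
  have h := intervalIntegral_tendsto_integral_Ioi (0:ℝ) (f := stdNormalPDF) (μ := volume)
    integrable_pdf.integrableOn tendsto_id
  rw [integral_Ioi_pdf] at h
  have h2 : Tendsto (fun b : ℝ => stdNormalCDF 0 + ∫ u in (0:ℝ)..b, stdNormalPDF u) atTop
      (nhds (stdNormalCDF 0 + (1 - stdNormalCDF 0))) := tendsto_const_nhds.add h
  have e : stdNormalCDF 0 + (1 - stdNormalCDF 0) = 1 := by ring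
  rw [e] at h2
  refine h2.congr fun b => ?_
  have := cdf_sub_cdf 0 b
  linarith

lemma cdf_mono : Monotone stdNormalCDF := by
  intro a b hab
  have h := cdf_sub_cdf a b
  have : 0 ≤ ∫ u in a..b, stdNormalPDF u :=
    intervalIntegral.integral_nonneg hab (fun u _ => (pdf_pos u).le)
  linarith

lemma cdf_nonneg (a : ℝ) : 0 ≤ stdNormalCDF a :=
  le_of_tendsto tendsto_cdf_atBot
    (by filter_upwards [Iic_mem_atBot a] with t ht using cdf_mono ht)

lemma cdf_le_one (a : ℝ) : stdNormalCDF a ≤ 1 :=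
  ge_of_tendsto tendsto_cdf_atTop
    (by filter_upwards [Ici_mem_atTop a] with t ht using cdf_mono ht)

lemma cdf_neg (a : ℝ) : stdNormalCDF (-a) = 1 - stdNormalCDF a := by
  have h : ∫ u in Iic (-a), stdNormalPDF u = ∫ u in Ioi a, stdNormalPDF u := by
    rw [← integral_comp_neg_Ioi]
    congr 1
    funext u
    rw [pdf_eq]
    simp [neg_pow]
  rw [stdNormalCDF, h, integral_Ioi_pdf]

lemma cdf_zero : stdNormalCDF 0 = 1/2 := by
  have := cdf_neg 0
  rw [neg_zero] at this
  linarith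


noncomputable def auxF (y : ℝ) : ℝ :=
  2 / Real.pi * stdNormalCDF y * (1 - stdNormalCDF y) - stdNormalPDF y ^ 2

noncomputable def auxG (y : ℝ) : ℝ :=
  2 / Real.pi * (1 - 2 * stdNormalCDF y) + 2 * y * stdNormalPDF y

lemma hasDerivAt_auxG (y : ℝ) :
    HasDerivAt auxG (2 * stdNormalPDF y * (1 - 2 / Real.pi - y ^ 2)) y := by
  have hΦ := hasDerivAt_cdf y
  have hφ := hasDerivAt_pdf y
  have h1 : HasDerivAt (fun t : ℝ => 2 / Real.pi * (1 - 2 * stdNormalCDF t))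
      (2 / Real.pi * (-(2 * stdNormalPDF y))) y := (((hΦ.const_mul 2).const_sub 1).const_mul _)
  have h2 : HasDerivAt (fun t : ℝ => 2 * t * stdNormalPDF t)
      (2 * stdNormalPDF y + 2 * y * (-y * stdNormalPDF y)) y := by
    have := ((hasDerivAt_id y).const_mul 2).mul hφ
    refine this.congr_deriv ?_
    simp only [id_eq]
    ring
  have := h1.add h2
  refine this.congr_deriv ?_
  have hπ := Real.pi_pos
  field_simp
  ring

lemma hasDerivAt_auxF (y : ℝ) :
    HasDerivAt auxF (stdNormalPDF y * auxG y) y := by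
  have hΦ := hasDerivAt_cdf y
  have hφ := hasDerivAt_pdf y
  have h1 : HasDerivAt (fun t : ℝ => 2 / Real.pi * stdNormalCDF t * (1 - stdNormalCDF t))
      (2 / Real.pi * stdNormalPDF y * (1 - stdNormalCDF y)
        + 2 / Real.pi * stdNormalCDF y * (-stdNormalPDF y)) y := by
    exact ((hΦ.const_mul (2 / Real.pi)).mul (hΦ.const_sub 1))
  have h2 : HasDerivAt (fun t : ℝ => stdNormalPDF t ^ 2)
      (2 * stdNormalPDF y * (-y * stdNormalPDF y)) y := by
    have := hφ.pow 2
    exact this.congr_deriv (by norm_num <;> ring)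
  have := h1.sub h2
  refine this.congr_deriv ?_
  rw [auxG]
  ring

lemma auxG_zero : auxG 0 = 0 := by
  rw [auxG, cdf_zero]; ring

lemma auxF_zero : auxF 0 = 0 := by
  have h : stdNormalPDF 0 ^ 2 = (2 * Real.pi)⁻¹ := by
    rw [stdNormalPDF]
    have : ((0:ℝ) ^ 2) = 0 := by norm_num
    rw [this]
    rw [neg_zero, zero_div, Real.exp_zero, mul_one]
    rw [← Real.sqrt_inv]
    exact Real.sq_sqrt (by positivity)
  rw [auxF, cdf_zero, h]
  have hπ := Real.pi_pos
  field_simp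
  ring

lemma pdf_even (y : ℝ) : stdNormalPDF (-y) = stdNormalPDF y := by
  rw [stdNormalPDF, stdNormalPDF, neg_pow]
  norm_num

lemma auxF_even (y : ℝ) : auxF (-y) = auxF y := by
  rw [auxF, auxF, cdf_neg, pdf_even]; ring

lemma tendsto_auxF_atTop : Tendsto auxF atTop (nhds 0) := by
  have h1 := tendsto_cdf_atTop
  have h2 := tendsto_pdf_atTop
  have : Tendsto auxF atTop
      (nhds (2 / Real.pi * 1 * (1 - 1) - 0 ^ 2)) := by
    exact (((tendsto_const_nhds.mul h1).mul (tendsto_const_nhds.sub h1)).sub (h2.pow 2))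
  simpa using this


lemma diff_auxG : Differentiable ℝ auxG := fun y => (hasDerivAt_auxG y).differentiableAt
lemma diff_auxF : Differentiable ℝ auxF := fun y => (hasDerivAt_auxF y).differentiableAt

lemma deriv_auxG (y : ℝ) : deriv auxG y = 2 * stdNormalPDF y * (1 - 2 / Real.pi - y ^ 2) :=
  (hasDerivAt_auxG y).deriv

lemma deriv_auxF (y : ℝ) : deriv auxF y = stdNormalPDF y * auxG y :=
  (hasDerivAt_auxF y).deriv

lemma two_div_pi_lt_one : 2 / Real.pi < 1 := by
  rw [div_lt_one Real.pi_pos]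
  have := Real.pi_gt_three; linarith

noncomputable def ys : ℝ := Real.sqrt (1 - 2 / Real.pi)

lemma ys_nonneg : 0 ≤ ys := Real.sqrt_nonneg _

lemma ys_sq : ys ^ 2 = 1 - 2 / Real.pi := by
  rw [ys, Real.sq_sqrt (by linarith [two_div_pi_lt_one])]

lemma auxG_monoOn : MonotoneOn auxG (Icc 0 ys) := by
  apply monotoneOn_of_deriv_nonneg (convex_Icc 0 ys) diff_auxG.continuous.continuousOn
    diff_auxG.differentiableOn
  intro y hy
  rw [interior_Icc] at hy
  rw [deriv_auxG]
  have h1 : y ^ 2 ≤ ys ^ 2 := by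
    apply pow_le_pow_left₀ hy.1.le hy.2.le
  rw [ys_sq] at h1
  have := (pdf_pos y).le
  nlinarith

lemma auxG_antiOn : AntitoneOn auxG (Ici ys) := by
  apply antitoneOn_of_deriv_nonpos (convex_Ici ys) diff_auxG.continuous.continuousOn
    diff_auxG.differentiableOn
  intro y hy
  rw [interior_Ici] at hy
  rw [deriv_auxG]
  have h1 : ys ^ 2 ≤ y ^ 2 := pow_le_pow_left₀ ys_nonneg hy.le 2
  rw [ys_sq] at h1
  have := (pdf_pos y).le
  nlinarith

lemma auxF_nonneg (c : ℝ) : 0 ≤ auxF c := by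
  suffices h : ∀ c : ℝ, 0 ≤ c → 0 ≤ auxF c by
    rcases le_or_gt 0 c with hc | hc
    · exact h c hc
    · rw [← auxF_even]; exact h (-c) (by linarith)
  clear c
  intro c hc
  rcases le_or_gt 0 (auxG c) with hGc | hGc
  · -- F monotone on [0, c]
    have monoF : MonotoneOn auxF (Icc 0 c) := by
      apply monotoneOn_of_deriv_nonneg (convex_Icc 0 c) diff_auxF.continuous.continuousOn
        diff_auxF.differentiableOn
      intro y hy
      rw [interior_Icc] at hy
      rw [deriv_auxF]
      have hG : 0 ≤ auxG y := by
        rcases le_or_gt y ys with hyy | hyy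
        · have := auxG_monoOn (left_mem_Icc.mpr ys_nonneg) ⟨hy.1.le, hyy⟩ hy.1.le
          rwa [auxG_zero] at this
        · have hcys : ys ≤ c := le_trans hyy.le hy.2.le
          have := auxG_antiOn (mem_Ici.mpr hyy.le) (mem_Ici.mpr hcys) hy.2.le
          linarith
      exact mul_nonneg (pdf_pos y).le hG
    have := monoF (left_mem_Icc.mpr hc) (right_mem_Icc.mpr hc) hc
    rwa [auxF_zero] at this
  · -- auxG c < 0, so c > ys and F antitone on [c, ∞)
    have hcys : ys < c := by
      by_contra hcon
      push_neg at hcon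
      have := auxG_monoOn (left_mem_Icc.mpr ys_nonneg) ⟨hc, hcon⟩ hc
      rw [auxG_zero] at this
      linarith
    have antiF : AntitoneOn auxF (Ici c) := by
      apply antitoneOn_of_deriv_nonpos (convex_Ici c) diff_auxF.continuous.continuousOn
        diff_auxF.differentiableOn
      intro y hy
      rw [interior_Ici] at hy
      rw [deriv_auxF]
      have hG : auxG y ≤ auxG c := auxG_antiOn (mem_Ici.mpr hcys.le)
        (mem_Ici.mpr (hcys.le.trans hy.le)) hy.le
      have := pdf_pos y
      nlinarith
    apply le_of_tendsto tendsto_auxF_atTop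
    filter_upwards [Ici_mem_atTop c] with t ht
    exact antiF (mem_Ici.mpr le_rfl) (mem_Ici.mpr ht) ht

lemma pointwise_bound (c : ℝ) :
    stdNormalPDF c ^ 2 ≤ 2 / Real.pi * stdNormalCDF c * (1 - stdNormalCDF c) := by
  have := auxF_nonneg c
  rw [auxF] at this
  linarith

lemma alt_sum_bound (b : ℕ → ℝ) (hb : Antitone b) (h0 : ∀ k, 0 ≤ b k) (h1 : ∀ k, b k ≤ 1) :
    ∀ n : ℕ, 0 ≤ ∑ k ∈ Finset.range n, (-1:ℝ)^k * b k ∧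
      ∑ k ∈ Finset.range n, (-1:ℝ)^k * b k ≤ b 0 := by
  intro n
  induction n generalizing b with
  | zero => simp [h0 0]
  | succ n ih =>
    have ih' := ih (fun k => b (k+1)) (fun i j hij => hb (by omega)) (fun k => h0 (k+1))
      (fun k => h1 (k+1))
    rw [Finset.sum_range_succ']
    have e : ∀ k, (-1:ℝ)^(k+1) * b (k+1) = -((-1:ℝ)^k * b (k+1)) := by
      intro k; rw [pow_succ]; ring
    rw [Finset.sum_congr rfl (fun k _ => e k), Finset.sum_neg_distrib]
    have hb01 : b 1 ≤ b 0 := hb (by omega)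
    simp only [pow_zero, one_mul]
    constructor
    · have := ih'.2; linarith
    · have := ih'.1; linarith

noncomputable def psi (m : ℕ) (y : ℕ → ℝ) (u : ℝ) : ℝ :=
  ∑ k ∈ Finset.range m, (-1:ℝ)^k * (Set.Iic (y k)).indicator (fun _ => (1:ℝ)) u

section Psi

variable (m : ℕ) (y : ℕ → ℝ)

lemma psi_mem (hy : Antitone y) (u : ℝ) : psi m y u ∈ Icc (0:ℝ) 1 := by
  have key := alt_sum_bound (fun k => (Set.Iic (y k)).indicator (fun _ => (1:ℝ)) u)
    (fun i j hij => by
      by_cases h : u ≤ y j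
      · have h2 : u ≤ y i := h.trans (hy hij)
        simp [Set.indicator_apply, mem_Iic, h, h2]
      · simp only [Set.indicator_apply, mem_Iic, h, if_false]
        by_cases h2 : u ≤ y i <;> simp [h2])
    (fun k => by by_cases h : u ≤ y k <;> simp [Set.indicator_apply, mem_Iic, h])
    (fun k => by by_cases h : u ≤ y k <;> simp [Set.indicator_apply, mem_Iic, h]) m
  have hb0 : (Set.Iic (y 0)).indicator (fun _ => (1:ℝ)) u ≤ 1 := by
    by_cases h : u ≤ y 0 <;> simp [Set.indicator_apply, mem_Iic, h]
  exact ⟨key.1, key.2.trans hb0⟩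

lemma measurable_psi : Measurable (psi m y) := by
  apply Finset.measurable_sum
  intro k _
  exact (measurable_const.indicator measurableSet_Iic).const_mul _

lemma integrable_psi_pdf (hy : Antitone y) :
    Integrable (fun u => psi m y u * stdNormalPDF u) := by
  refine Integrable.mono' integrable_pdf
    (((measurable_psi m y).mul (by rw [pdf_eq]; fun_prop)).aestronglyMeasurable)
    (Eventually.of_forall fun u => ?_)
  have h := psi_mem m y hy u
  rw [Real.norm_eq_abs, abs_mul, abs_of_nonneg (pdf_pos u).le]
  have : |psi m y u| ≤ 1 := by rw [abs_le]; exact ⟨by linarith [h.1], h.2⟩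
  nlinarith [pdf_pos u]

lemma integrable_psi_updf (hy : Antitone y) :
    Integrable (fun u => psi m y u * (u * stdNormalPDF u)) := by
  refine Integrable.mono' integrable_mul_pdf.abs
    (((measurable_psi m y).mul ((measurable_id.mul (by rw [pdf_eq]; fun_prop)))).aestronglyMeasurable)
    (Eventually.of_forall fun u => ?_)
  have h := psi_mem m y hy u
  rw [Real.norm_eq_abs, abs_mul]
  have : |psi m y u| ≤ 1 := by rw [abs_le]; exact ⟨by linarith [h.1], h.2⟩
  nlinarith [abs_nonneg (u * stdNormalPDF u)]

lemma indicator_one_mul (a : ℝ) (g : ℝ → ℝ) (u : ℝ) :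
    (Set.Iic a).indicator (fun _ => (1:ℝ)) u * g u = (Set.Iic a).indicator g u := by
  by_cases h : u ∈ Set.Iic a <;> simp [h]

lemma sum_cdf_eq : ∑ k ∈ Finset.range m, (-1:ℝ)^k * stdNormalCDF (y k)
    = ∫ u, psi m y u * stdNormalPDF u := by
  have e : ∀ u : ℝ, psi m y u * stdNormalPDF u
      = ∑ k ∈ Finset.range m, (-1:ℝ)^k * (Set.Iic (y k)).indicator stdNormalPDF u := by
    intro u
    rw [psi, Finset.sum_mul]
    refine Finset.sum_congr rfl fun k _ => ?_
    rw [mul_assoc, indicator_one_mul]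
  simp_rw [e]
  rw [integral_finset_sum _ (fun k _ => ((integrable_pdf.indicator measurableSet_Iic).const_mul _))]
  refine Finset.sum_congr rfl fun k _ => ?_
  rw [integral_const_mul, integral_indicator measurableSet_Iic]
  rfl

lemma sum_pdf_eq : ∑ k ∈ Finset.range m, (-1:ℝ)^k * stdNormalPDF (y k)
    = -∫ u, psi m y u * (u * stdNormalPDF u) := by
  have e : ∀ u : ℝ, psi m y u * (u * stdNormalPDF u)
      = ∑ k ∈ Finset.range m, (-1:ℝ)^k * (Set.Iic (y k)).indicator (fun v => v * stdNormalPDF v) u := by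
    intro u
    rw [psi, Finset.sum_mul]
    refine Finset.sum_congr rfl fun k _ => ?_
    rw [mul_assoc, indicator_one_mul (y k) (fun v => v * stdNormalPDF v) u]
  simp_rw [e]
  rw [integral_finset_sum _ (fun k _ => ((integrable_mul_pdf.indicator measurableSet_Iic).const_mul _))]
  rw [← Finset.sum_neg_distrib]
  refine Finset.sum_congr rfl fun k _ => ?_
  rw [integral_const_mul, integral_indicator measurableSet_Iic, integral_Iic_mul_pdf]
  ring

end Psi

section Bathtub

variable (m : ℕ) (y : ℕ → ℝ)

lemma bathtub_upper (hy : Antitone y) (c : ℝ) :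
    -(∫ u, psi m y u * (u * stdNormalPDF u)) ≤
      stdNormalPDF c - c * ((∫ u, psi m y u * stdNormalPDF u) - stdNormalCDF c) := by
  have h1 := integrable_psi_updf m y hy
  have h2 := integrable_psi_pdf m y hy
  have h3 : Integrable ((Set.Iic c).indicator (fun v => v * stdNormalPDF v)) :=
    integrable_mul_pdf.indicator measurableSet_Iic
  have h4 : Integrable ((Set.Iic c).indicator stdNormalPDF) :=
    integrable_pdf.indicator measurableSet_Iic
  have key : 0 ≤ ∫ u, (psi m y u * (u * stdNormalPDF u) - c * (psi m y u * stdNormalPDF u)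
      - (Set.Iic c).indicator (fun v => v * stdNormalPDF v) u
      + c * (Set.Iic c).indicator stdNormalPDF u) := by
    apply integral_nonneg
    intro u
    have hψ := psi_mem m y hy u
    have hp := (pdf_pos u).le
    by_cases hu : u ∈ Set.Iic c
    · simp only [Set.indicator_of_mem hu]
      have hu' : u ≤ c := mem_Iic.mp hu
      have e2 : psi m y u * (u * stdNormalPDF u) - c * (psi m y u * stdNormalPDF u)
          - u * stdNormalPDF u + c * stdNormalPDF u
          = (1 - psi m y u) * ((c - u) * stdNormalPDF u) := by ring
      rw [e2]
      exact mul_nonneg (by linarith [hψ.2]) (mul_nonneg (by linarith) hp)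
    · simp only [Set.indicator_of_notMem hu]
      have hu' : c < u := by simpa [mem_Iic] using hu
      have e2 : psi m y u * (u * stdNormalPDF u) - c * (psi m y u * stdNormalPDF u) - 0 + c * 0
          = psi m y u * ((u - c) * stdNormalPDF u) := by ring
      rw [e2]
      exact mul_nonneg hψ.1 (mul_nonneg (by linarith) hp)
  have e3 : ∫ u, (psi m y u * (u * stdNormalPDF u) - c * (psi m y u * stdNormalPDF u)
      - (Set.Iic c).indicator (fun v => v * stdNormalPDF v) u
      + c * (Set.Iic c).indicator stdNormalPDF u)
      = (∫ u, psi m y u * (u * stdNormalPDF u)) - c * (∫ u, psi m y u * stdNormalPDF u)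
        + stdNormalPDF c + c * stdNormalCDF c := by
    have hB : Integrable (fun u => psi m y u * (u * stdNormalPDF u)
        - c * (psi m y u * stdNormalPDF u)) := h1.sub (h2.const_mul c)
    have hA : Integrable (fun u => psi m y u * (u * stdNormalPDF u)
        - c * (psi m y u * stdNormalPDF u)
        - (Set.Iic c).indicator (fun v => v * stdNormalPDF v) u) := hB.sub h3
    rw [integral_add hA (h4.const_mul c),
        integral_sub hB h3,
        integral_sub h1 (h2.const_mul c),
        integral_const_mul, integral_const_mul,
        integral_indicator measurableSet_Iic, integral_indicator measurableSet_Iic,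
        integral_Iic_mul_pdf]
    rw [show (∫ u in Set.Iic c, stdNormalPDF u) = stdNormalCDF c from rfl]
    ring
  rw [e3] at key
  linarith

lemma bathtub_lower (hy : Antitone y) (c : ℝ) :
    (∫ u, psi m y u * (u * stdNormalPDF u)) ≤
      stdNormalPDF c + c * ((∫ u, psi m y u * stdNormalPDF u) - (1 - stdNormalCDF c)) := by
  have h1 := integrable_psi_updf m y hy
  have h2 := integrable_psi_pdf m y hy
  have h3 : Integrable ((Set.Ici c).indicator (fun v => v * stdNormalPDF v)) :=
    integrable_mul_pdf.indicator measurableSet_Ici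
  have h4 : Integrable ((Set.Ici c).indicator stdNormalPDF) :=
    integrable_pdf.indicator measurableSet_Ici
  have key : (∫ u, (psi m y u * (u * stdNormalPDF u) - c * (psi m y u * stdNormalPDF u)
      - (Set.Ici c).indicator (fun v => v * stdNormalPDF v) u
      + c * (Set.Ici c).indicator stdNormalPDF u)) ≤ 0 := by
    apply integral_nonpos
    intro u
    have hψ := psi_mem m y hy u
    have hp := (pdf_pos u).le
    by_cases hu : u ∈ Set.Ici c
    · simp only [Set.indicator_of_mem hu]
      have hu' : c ≤ u := mem_Ici.mp hu
      have e2 : psi m y u * (u * stdNormalPDF u) - c * (psi m y u * stdNormalPDF u)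
          - u * stdNormalPDF u + c * stdNormalPDF u
          = (psi m y u - 1) * ((u - c) * stdNormalPDF u) := by ring
      rw [e2]
      exact mul_nonpos_of_nonpos_of_nonneg (by linarith [hψ.2]) (mul_nonneg (by linarith) hp)
    · simp only [Set.indicator_of_notMem hu]
      have hu' : u < c := by simpa [mem_Ici] using hu
      have e2 : psi m y u * (u * stdNormalPDF u) - c * (psi m y u * stdNormalPDF u) - 0 + c * 0
          = -(psi m y u * ((c - u) * stdNormalPDF u)) := by ring
      rw [e2]
      exact neg_nonpos.mpr (mul_nonneg hψ.1 (mul_nonneg (by linarith) hp))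
  have e3 : ∫ u, (psi m y u * (u * stdNormalPDF u) - c * (psi m y u * stdNormalPDF u)
      - (Set.Ici c).indicator (fun v => v * stdNormalPDF v) u
      + c * (Set.Ici c).indicator stdNormalPDF u)
      = (∫ u, psi m y u * (u * stdNormalPDF u)) - c * (∫ u, psi m y u * stdNormalPDF u)
        - stdNormalPDF c + c * (1 - stdNormalCDF c) := by
    have hB : Integrable (fun u => psi m y u * (u * stdNormalPDF u)
        - c * (psi m y u * stdNormalPDF u)) := h1.sub (h2.const_mul c)
    have hA : Integrable (fun u => psi m y u * (u * stdNormalPDF u)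
        - c * (psi m y u * stdNormalPDF u)
        - (Set.Ici c).indicator (fun v => v * stdNormalPDF v) u) := hB.sub h3
    rw [integral_add hA (h4.const_mul c),
        integral_sub hB h3,
        integral_sub h1 (h2.const_mul c),
        integral_const_mul, integral_const_mul,
        integral_indicator measurableSet_Ici, integral_indicator measurableSet_Ici,
        integral_Ici_eq_integral_Ioi, integral_Ici_eq_integral_Ioi,
        integral_Ioi_mul_pdf, integral_Ioi_pdf]
  rw [e3] at key
  linarith

end Bathtub

lemma continuous_cdf : Continuous stdNormalCDF := by
  have h : Differentiable ℝ stdNormalCDF := fun y => (hasDerivAt_cdf y).differentiableAt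
  exact h.continuous

lemma exists_cdf_eq {B : ℝ} (h0 : 0 < B) (h1 : B < 1) : ∃ c, stdNormalCDF c = B := by
  obtain ⟨a, ha⟩ := (tendsto_cdf_atBot.eventually_lt_const h0).exists
  obtain ⟨b, hb⟩ := (tendsto_cdf_atTop.eventually_const_lt h1).exists
  have := intermediate_value_univ a b continuous_cdf
  have hmem : B ∈ Icc (stdNormalCDF a) (stdNormalCDF b) := ⟨ha.le, hb.le⟩
  exact this hmem

lemma integral_mul_pdf_total : ∫ u : ℝ, u * stdNormalPDF u = 0 := by
  have h : ∀ u : ℝ, HasDerivAt (fun t => -stdNormalPDF t) (u * stdNormalPDF u) u := by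
    intro u
    have := (hasDerivAt_pdf u).neg
    exact this.congr_deriv (by ring)
  have := integral_of_hasDerivAt_of_tendsto h integrable_mul_pdf
    (by simpa using tendsto_pdf_atBot.neg) (by simpa using tendsto_pdf_atTop.neg)
  simpa using this

theorem alternating_normal_sum_bound (n : ℕ) (hn : 1 ≤ n) (x : Fin n → ℝ)
    (hx : Antitone x) :
    (∑ k : Fin n, (-1 : ℝ) ^ (k : ℕ) * stdNormalPDF (x k)) ^ 2 ≤
      (2 / Real.pi) * (∑ k : Fin n, (-1 : ℝ) ^ (k : ℕ) * stdNormalCDF (x k)) *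
        (1 - ∑ k : Fin n, (-1 : ℝ) ^ (k : ℕ) * stdNormalCDF (x k)) := by
  have hn1 : n - 1 < n := by omega
  set y : ℕ → ℝ := fun k => if h : k < n then x ⟨k, h⟩ else x ⟨n-1, hn1⟩ with hy_def
  have hy : Antitone y := by
    intro i j hij
    by_cases hj : j < n
    · have hi : i < n := lt_of_le_of_lt hij hj
      simp only [hy_def, dif_pos hi, dif_pos hj]
      exact hx (show (⟨i, hi⟩ : Fin n) ≤ ⟨j, hj⟩ from hij)
    · by_cases hi : i < n
      · simp only [hy_def, dif_pos hi, dif_neg hj]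
        exact hx (show (⟨i, hi⟩ : Fin n) ≤ ⟨n-1, hn1⟩ by
          simp [Fin.le_def]; omega)
      · simp [hy_def, dif_neg hi, dif_neg hj, le_refl]
  have hyx : ∀ k : Fin n, y (k : ℕ) = x k := by
    intro k
    simp only [hy_def, dif_pos k.isLt, Fin.eta]
  have hsum1 : ∑ k : Fin n, (-1 : ℝ) ^ (k : ℕ) * stdNormalCDF (x k)
      = ∑ k ∈ Finset.range n, (-1:ℝ)^k * stdNormalCDF (y k) := by
    rw [← Fin.sum_univ_eq_sum_range (fun k => (-1:ℝ)^k * stdNormalCDF (y k)) n]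
    exact Finset.sum_congr rfl fun k _ => by rw [hyx k]
  have hsum2 : ∑ k : Fin n, (-1 : ℝ) ^ (k : ℕ) * stdNormalPDF (x k)
      = ∑ k ∈ Finset.range n, (-1:ℝ)^k * stdNormalPDF (y k) := by
    rw [← Fin.sum_univ_eq_sum_range (fun k => (-1:ℝ)^k * stdNormalPDF (y k)) n]
    exact Finset.sum_congr rfl fun k _ => by rw [hyx k]
  rw [hsum1, hsum2, sum_cdf_eq n y, sum_pdf_eq n y]
  set A := ∫ u, psi n y u * (u * stdNormalPDF u) with hA_def
  set B := ∫ u, psi n y u * stdNormalPDF u with hB_def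
  have hB0 : 0 ≤ B := integral_nonneg fun u => mul_nonneg (psi_mem n y hy u).1 (pdf_pos u).le
  have hB1 : B ≤ 1 := by
    rw [hB_def, ← integral_pdf]
    apply integral_mono (integrable_psi_pdf n y hy) integrable_pdf
    intro u
    show psi n y u * stdNormalPDF u ≤ stdNormalPDF u
    have := (psi_mem n y hy u).2
    nlinarith [pdf_pos u]
  rcases eq_or_lt_of_le hB0 with hB0' | hB0'
  · -- B = 0 : then A = 0
    have hzero : (fun u => psi n y u * stdNormalPDF u) =ᵐ[volume] 0 := by
      rw [← integral_eq_zero_iff_of_nonneg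
        (fun u => mul_nonneg (psi_mem n y hy u).1 (pdf_pos u).le) (integrable_psi_pdf n y hy)]
      exact hB0'.symm
    have hzero2 : (fun u => psi n y u * (u * stdNormalPDF u)) =ᵐ[volume] 0 := by
      filter_upwards [hzero] with u hu
      simp only [Pi.zero_apply] at hu ⊢
      have : psi n y u * (u * stdNormalPDF u) = u * (psi n y u * stdNormalPDF u) := by ring
      rw [this, hu, mul_zero]
    have hA0 : A = 0 := by
      rw [hA_def, integral_congr_ae hzero2]
      simp
    rw [hA0, ← hB0']
    norm_num
  rcases eq_or_lt_of_le hB1 with hB1' | hB1'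
  · -- B = 1 : then A = 0
    have hint : Integrable (fun u => stdNormalPDF u - psi n y u * stdNormalPDF u) :=
      integrable_pdf.sub (integrable_psi_pdf n y hy)
    have hnn : ∀ u, 0 ≤ stdNormalPDF u - psi n y u * stdNormalPDF u := by
      intro u
      nlinarith [(psi_mem n y hy u).2, pdf_pos u]
    have hzero : (fun u => stdNormalPDF u - psi n y u * stdNormalPDF u) =ᵐ[volume] 0 := by
      rw [← integral_eq_zero_iff_of_nonneg hnn hint]
      rw [integral_sub integrable_pdf (integrable_psi_pdf n y hy), integral_pdf, ← hB_def, hB1']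
      ring
    have hzero2 : (fun u => psi n y u * (u * stdNormalPDF u)) =ᵐ[volume]
        (fun u => u * stdNormalPDF u) := by
      filter_upwards [hzero] with u hu
      simp only [Pi.zero_apply] at hu
      have h1 : psi n y u * stdNormalPDF u = stdNormalPDF u := by linarith
      calc psi n y u * (u * stdNormalPDF u) = u * (psi n y u * stdNormalPDF u) := by ring
        _ = u * stdNormalPDF u := by rw [h1]
    have hA0 : A = 0 := by
      rw [hA_def, integral_congr_ae hzero2, integral_mul_pdf_total]
    rw [hA0, ← hB1']
    norm_num
  -- 0 < B < 1
  obtain ⟨c, hc⟩ := exists_cdf_eq hB0' hB1'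
  have hup := bathtub_upper n y hy c
  rw [← hA_def, ← hB_def, hc] at hup
  have hup' : -A ≤ stdNormalPDF c := by
    simpa using hup
  have hlo := bathtub_lower n y hy (-c)
  rw [← hA_def, ← hB_def, cdf_neg, hc, pdf_even] at hlo
  have hlo' : A ≤ stdNormalPDF c := by
    have e : stdNormalPDF c + -c * (B - (1 - (1 - B))) = stdNormalPDF c := by ring
    rwa [e] at hlo
  have hsq : (-A) ^ 2 ≤ stdNormalPDF c ^ 2 := by
    rw [neg_pow]
    have := sq_le_sq' (by linarith : -stdNormalPDF c ≤ A) hlo'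
    simpa using this
  calc (-A) ^ 2 ≤ stdNormalPDF c ^ 2 := hsq
    _ ≤ 2 / Real.pi * stdNormalCDF c * (1 - stdNormalCDF c) := pointwise_bound c
    _ = 2 / Real.pi * B * (1 - B) := by rw [hc]
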